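/- Let 0 → A' → A → A'' → 0 be a short exact sequence of condensed abelian groups (equivalently, sheaves of abelian groups on extremally disconnected profinite sets). Then A' and A'' are both discrete if and only if A is discrete, where a condensed abelian group T is discrete if for every extremally disconnected profinite set S = lim_i S_i (a cofiltered limit of finite sets) the natural map colim_i T(S_i) → T(S) is an isomorphism. -/

import Mathlib

/-!
STATEMENT 18: Let `0 → A' → A → A'' → 0` be a short exact sequence of condensed abelian
groups.  Then `A'` and `A''` are both discrete if and only if `A` is discrete.
(A condensed abelian group is discrete iff it is in the essential image of the constant
sheaf embedding `Ab → Cond(Ab)`, which by `CondensedMod.isDiscrete_tfae` is equivalent to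
the colimit condition `colim_i T(S_i) ≅ T(S)` for every profinite `S = lim_i S_i`.)
-/

universe u

open CategoryTheory Limits Condensed

namespace Statement18

abbrev R18 : Type (u+1) := ULift.{u+1} ℤ

noncomputable abbrev Dfun : ModuleCat.{u+1} R18.{u} ⥤ CondensedAb.{u} :=
  Condensed.discrete _

noncomputable abbrev Ufun : CondensedAb.{u} ⥤ ModuleCat.{u+1} R18.{u} :=
  Condensed.underlying _

noncomputable abbrev adj18 : Dfun.{u} ⊣ Ufun.{u} := Condensed.discreteUnderlyingAdj _

instance : Ufun.{u}.Additive := { map_add := rfl }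

noncomputable instance : PreservesFiniteLimits Ufun.{u} :=
  comp_preservesFiniteLimits (sheafToPresheaf _ _)
    ((evaluation _ _).obj ⟨CompHaus.of PUnit⟩)

noncomputable instance : PreservesFiniteLimits Dfun.{u} :=
  comp_preservesFiniteLimits (Functor.const _) (presheafToSheaf _ _)

noncomputable instance : Dfun.{u}.Additive :=
  Functor.additive_of_preserves_binary_products _

noncomputable instance : PreservesColimits Dfun.{u} :=
  adj18.leftAdjoint_preservesColimits

lemma epi_U_map {X Y : CondensedAb.{u}} (f : X ⟶ Y) [Epi f] : Epi (Ufun.{u}.map f) := by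
  rw [ModuleCat.epi_iff_surjective]
  intro y
  obtain ⟨S', φ, hφ, x, hx⟩ :=
    (CondensedMod.epi_iff_locallySurjective_on_compHaus _ f).mp inferInstance
      (CompHaus.of PUnit) y
  obtain ⟨s, -⟩ := hφ PUnit.unit
  let p : CompHaus.of PUnit.{u+1} ⟶ S' := CompHausLike.ofHom _ ⟨fun _ ↦ s, continuous_const⟩
  refine ⟨X.val.map p.op x, ?_⟩
  have h1 : Ufun.{u}.map f (X.val.map p.op x) = Y.val.map p.op (f.hom.app _ x) := by
    change (X.val.map p.op ≫ f.hom.app _) x = (f.hom.app _ ≫ Y.val.map p.op) x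
    rw [f.hom.naturality]
  rw [h1, hx]
  have h2 : (p ≫ φ) = 𝟙 (CompHaus.of PUnit.{u+1}) := by
    ext t
  change (Y.val.map φ.op ≫ Y.val.map p.op) y = y
  rw [← Y.val.map_comp, ← op_comp, h2]
  simp
  rfl


lemma mono_counit (X : CondensedAb.{u}) : Mono (adj18.{u}.counit.app X) := by
  let M : ModuleCat.{u+1} R18.{u} := Ufun.{u}.obj X
  let i : (CondensedMod.LocallyConstant.functor.{u} R18.{u}).obj M ≅ Dfun.{u}.obj M :=
    (CondensedMod.LocallyConstant.functorIsoDiscrete.{u} R18.{u}).app M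
  let ε' : (CondensedMod.LocallyConstant.functor.{u} R18.{u}).obj M ⟶ X :=
    i.hom ≫ adj18.{u}.counit.app X
  have hfac : adj18.{u}.counit.app X = i.inv ≫ ε' := by simp [ε']
  suffices h : Mono ε' by rw [hfac]; exact mono_comp _ _
  -- the counit is an isomorphism on underlying modules
  have hpt : IsIso (Ufun.{u}.map (adj18.{u}.counit.app X)) := by
    have h2 := adj18.{u}.right_triangle_components X
    have h3 : IsIso (adj18.{u}.unit.app M ≫ Ufun.{u}.map (adj18.{u}.counit.app X)) := by
      rw [h2]; infer_instance
    exact IsIso.of_isIso_comp_left (adj18.{u}.unit.app M) _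
  have hpt' : IsIso (Ufun.{u}.map ε') := by
    have : Ufun.{u}.map ε' = Ufun.{u}.map i.hom ≫ Ufun.{u}.map (adj18.{u}.counit.app X) := by
      exact Functor.map_comp _ _ _
    rw [this]; infer_instance
  have hinj : Function.Injective (Ufun.{u}.map ε') :=
    (ModuleCat.mono_iff_injective (Ufun.{u}.map ε')).mp (IsIso.mono_of_iso _)
  haveI hpb : HasPullbacks (ModuleCat.{u+1} R18.{u}) := inferInstance
  have happ : ∀ (T : CompHaus.{u}ᵒᵖ), Mono (ε'.hom.app T) := by
    rintro ⟨S⟩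
    rw [ModuleCat.mono_iff_injective]
    intro f g hfg
    apply LocallyConstant.ext
    intro s
    let p : CompHaus.of PUnit.{u+1} ⟶ S := CompHausLike.ofHom _ ⟨fun _ ↦ s, continuous_const⟩
    have hnat := fun (a : ((CondensedMod.LocallyConstant.functor.{u} R18.{u}).obj M).val.obj
        (Opposite.op S)) ↦
      congrFun (congrArg (fun (φ : _ ⟶ _) ↦ (φ : _ → _)) (ε'.hom.naturality p.op)) a
    have h5 := hnat f
    have h6 := hnat g
    simp only [Functor.comp_map, types_comp_apply] at h5 h6
    have h7 : (ε'.hom.app (Opposite.op (CompHaus.of PUnit.{u+1})))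
          ((((CondensedMod.LocallyConstant.functor.{u} R18.{u}).obj M).val.map p.op) f) =
        (ε'.hom.app (Opposite.op (CompHaus.of PUnit.{u+1})))
          ((((CondensedMod.LocallyConstant.functor.{u} R18.{u}).obj M).val.map p.op) g) := by
      change (((CondensedMod.LocallyConstant.functor.{u} R18.{u}).obj M).val.map p.op ≫
          ε'.hom.app _) f = (((CondensedMod.LocallyConstant.functor.{u} R18.{u}).obj M).val.map p.op ≫
          ε'.hom.app _) g
      rw [ε'.hom.naturality p.op]
      change (X.val.map p.op) ((ε'.hom.app _) f) = (X.val.map p.op) ((ε'.hom.app _) g)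
      rw [hfg]
    have h8 := hinj h7
    have h9 := LocallyConstant.congr_fun h8 PUnit.unit
    exact h9
  haveI : Mono ε'.hom := NatTrans.mono_of_mono_app ε'.hom
  exact Sheaf.Hom.mono_of_presheaf_mono (J := coherentTopology CompHaus.{u}) (A := ModuleCat.{u+1} R18.{u}) ε'

lemma isDiscrete_iff_isIso_counit (X : CondensedAb.{u}) :
    Condensed.IsDiscrete X ↔ IsIso (adj18.{u}.counit.app X) :=
  Sheaf.isConstant_iff_isIso_counit_app _ _ _

theorem main (S : ShortComplex (CondensedAb.{u})) (hS : S.ShortExact) :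
    (Condensed.IsDiscrete S.X₁ ∧ Condensed.IsDiscrete S.X₃) ↔ Condensed.IsDiscrete S.X₂ := by
  haveI := hS.mono_f
  haveI := hS.epi_g
  let L : CondensedAb.{u} ⥤ CondensedAb.{u} := Ufun.{u} ⋙ Dfun.{u}
  haveI hLlim : PreservesFiniteLimits L := comp_preservesFiniteLimits _ _
  let φ : S.map L ⟶ S :=
    { τ₁ := adj18.{u}.counit.app S.X₁
      τ₂ := adj18.{u}.counit.app S.X₂
      τ₃ := adj18.{u}.counit.app S.X₃
      comm₁₂ := (adj18.{u}.counit.naturality S.f).symm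
      comm₂₃ := (adj18.{u}.counit.naturality S.g).symm }
  haveI hm : Mono ((S.map L).f) := preserves_mono_of_preservesLimit L S.f
  have hU : Epi (Ufun.{u}.map S.g) := epi_U_map S.g
  haveI he : Epi ((S.map L).g) := preserves_epi_of_preservesColimit Dfun.{u} (Ufun.{u}.map S.g)
  have hmap : (S.map L).ShortExact :=
    { exact := hS.exact.map_of_mono_of_preservesKernel L inferInstance inferInstance
      mono_f := hm
      epi_g := he }
  rw [isDiscrete_iff_isIso_counit, isDiscrete_iff_isIso_counit, isDiscrete_iff_isIso_counit]
  constructor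
  · rintro ⟨h₁, h₃⟩
    haveI : IsIso φ.τ₁ := h₁
    haveI : IsIso φ.τ₃ := h₃
    exact ShortComplex.isIso₂_of_shortExact_of_isIso₁₃ φ hmap hS
  · intro h₂
    haveI : IsIso (adj18.{u}.counit.app S.X₂) := h₂
    have hc₂ := adj18.{u}.counit.naturality S.g
    have hc₁ := adj18.{u}.counit.naturality S.f
    have h₃ : IsIso (adj18.{u}.counit.app S.X₃) := by
      have hepi : Epi ((S.map L).g ≫ adj18.{u}.counit.app S.X₃) := by
        rw [show ((S.map L).g ≫ adj18.{u}.counit.app S.X₃ : _) =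
          adj18.{u}.counit.app S.X₂ ≫ S.g from hc₂]
        exact @epi_comp _ _ _ _ _ _ (@IsIso.epi_of_iso _ _ _ _ _ h₂) _ _
      haveI : Epi (adj18.{u}.counit.app S.X₃) := epi_of_epi ((S.map L).g) _
      haveI := mono_counit S.X₃
      exact isIso_of_mono_of_epi _
    refine ⟨?_, h₃⟩
    have hk : (S.f ≫ inv (adj18.{u}.counit.app S.X₂)) ≫ (S.map L).g = 0 := by
      haveI := mono_counit S.X₃
      change (S.f ≫ inv (adj18.{u}.counit.app S.X₂)) ≫ (Ufun.{u} ⋙ Dfun.{u}).map S.g = 0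
      rw [← cancel_mono (adj18.{u}.counit.app S.X₃), Category.assoc, Category.assoc,
        hc₂, IsIso.inv_hom_id_assoc, Functor.id_map, S.zero, zero_comp]
    let v := hmap.exact.lift (S.f ≫ @inv _ _ _ _ (adj18.{u}.counit.app S.X₂) h₂) hk
    have hv : v ≫ (S.map L).f = S.f ≫ @inv _ _ _ _ (adj18.{u}.counit.app S.X₂) h₂ :=
      hmap.exact.lift_f _ _
    have hsplit : v ≫ adj18.{u}.counit.app S.X₁ = 𝟙 S.X₁ := by
      erw [← cancel_mono S.f, Category.assoc,
        show (adj18.{u}.counit.app S.X₁ ≫ S.f : _) = (S.map L).f ≫ adj18.{u}.counit.app S.X₂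
          from hc₁.symm, ← Category.assoc, hv, Category.assoc, IsIso.inv_hom_id,
        Category.comp_id]
    haveI : IsSplitEpi (adj18.{u}.counit.app S.X₁) := ⟨⟨⟨v, hsplit⟩⟩⟩
    haveI := mono_counit S.X₁
    exact @isIso_of_mono_of_epi _ _ _ _ _ _ this (IsSplitEpi.epi _)

end Statement18


theorem discrete_iff_discrete_of_shortExact
    (S : ShortComplex (CondensedAb.{u})) (hS : S.ShortExact) :
    (Condensed.IsDiscrete S.X₁ ∧ Condensed.IsDiscrete S.X₃) ↔ Condensed.IsDiscrete S.X₂ :=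
  Statement18.main S hS
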